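/- Let A and B be densely defined closable operators on a Hilbert space with σ(AB) ≠ ℂ and σ(BA) ≠ ℂ. If ker(A) = ker(A*) and ker(B) = ker(B*), then σ(AB) = σ(BA). -/

import Mathlib

open LinearPMap

set_option linter.unusedSectionVars false

noncomputable section

section BanachDefs

variable {H : Type*} [NormedAddCommGroup H] [NormedSpace ℂ H]

/-- Composition `g ∘ f` of unbounded operators, with the natural (maximal) domain
`{x ∈ dom f : f x ∈ dom g}`. -/
def LinearPMap.pComp (g f : H →ₗ.[ℂ] H) : H →ₗ.[ℂ] H where
  domain := (g.domain.comap f.toFun).map f.domain.subtype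
  toFun := g.toFun ∘ₗ (f.toFun.restrict (p := g.domain.comap f.toFun) (q := g.domain)
      (fun _ hx => hx)) ∘ₗ
    ((Submodule.equivMapOfInjective f.domain.subtype (Submodule.injective_subtype _)
      (g.domain.comap f.toFun)).symm).toLinearMap

/-- `n`-th power of an unbounded operator; `T^0` is the identity on all of `H`. -/
def LinearPMap.pPow (T : H →ₗ.[ℂ] H) : ℕ → (H →ₗ.[ℂ] H)
  | 0 => (LinearMap.id : H →ₗ[ℂ] H).toPMap ⊤
  | n + 1 => T.pComp (T.pPow n)

theorem LinearPMap.pPow_domain_succ_le (T : H →ₗ.[ℂ] H) (n : ℕ) :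
    (T.pPow (n + 1)).domain ≤ (T.pPow n).domain := by
  intro x hx
  simp_rw [pPow, pComp] at hx
  obtain ⟨y, -, rfl⟩ := hx
  exact y.2

theorem LinearPMap.pPow_domain_le (T : H →ₗ.[ℂ] H) {i n : ℕ} (h : i ≤ n) :
    (T.pPow n).domain ≤ (T.pPow i).domain := by
  induction n with
  | zero => exact Nat.le_zero.mp h ▸ le_rfl
  | succ n ih =>
    rcases Nat.lt_succ_iff_lt_or_eq.mp (Nat.lt_succ_of_le h) with h' | rfl
    · exact le_trans (T.pPow_domain_succ_le n) (ih (Nat.lt_succ_iff.mp h'))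
    · exact le_rfl

/-- `p(T)` for a complex polynomial `p`, defined on `D(T^n)` where `n = deg p`. -/
def LinearPMap.polyApp (p : Polynomial ℂ) (T : H →ₗ.[ℂ] H) : H →ₗ.[ℂ] H where
  domain := (T.pPow p.natDegree).domain
  toFun := ∑ i ∈ (Finset.range (p.natDegree + 1)).attach,
    p.coeff i.1 • ((T.pPow i.1).toFun ∘ₗ Submodule.inclusion
      (T.pPow_domain_le (Nat.lt_succ_iff.mp (Finset.mem_range.mp i.2))))

/-- `A - μ • I` with domain `dom A`. -/
def LinearPMap.subConst (A : H →ₗ.[ℂ] H) (μ : ℂ) : H →ₗ.[ℂ] H :=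
  ⟨A.domain, A.toFun - μ • A.domain.subtype⟩

/-- An unbounded operator is boundedly invertible if it is bijective from its domain onto `H`
with an everywhere-defined bounded (continuous) inverse. -/
def LinearPMap.IsBddInvertible (A : H →ₗ.[ℂ] H) : Prop :=
  ∃ B : H →L[ℂ] H, (∀ y : H, ∃ hy : B y ∈ A.domain, A ⟨B y, hy⟩ = y) ∧
    ∀ x : A.domain, B (A x) = (x : H)

/-- The spectrum of an unbounded operator: `μ ∉ σ(A)` iff `A - μI` is bijective with a
bounded everywhere-defined inverse. -/
def LinearPMap.pSpectrum (A : H →ₗ.[ℂ] H) : Set ℂ :=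
  {μ | ¬ (A.subConst μ).IsBddInvertible}

/-- The kernel of an unbounded operator, as a subset of `H`. -/
def LinearPMap.pKer (A : H →ₗ.[ℂ] H) : Set H :=
  {x | ∃ hx : x ∈ A.domain, A ⟨x, hx⟩ = 0}

/-- The range of an unbounded operator. -/
def LinearPMap.pRan (A : H →ₗ.[ℂ] H) : Set H :=
  Set.range fun x : A.domain => A x

/-- A bounded everywhere-defined operator seen as an unbounded operator. -/
def ContinuousLinearMap.toPMapTop (B : H →L[ℂ] H) : H →ₗ.[ℂ] H :=
  (B : H →ₗ[ℂ] H).toPMap ⊤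

end BanachDefs

section HilbertDefs

variable {H : Type*} [NormedAddCommGroup H] [InnerProductSpace ℂ H] [CompleteSpace H]

/-- A densely defined closed operator is quasinormal if `T T* T = T* T T`. -/
def LinearPMap.IsQuasinormal (T : H →ₗ.[ℂ] H) : Prop :=
  T.IsClosed ∧ Dense (T.domain : Set H) ∧
    T.pComp (T.adjoint.pComp T) = T.adjoint.pComp (T.pComp T)

/-- A densely defined closed operator is normal if `T* T = T T*` (an equality of unbounded
operators, domains included). -/
def LinearPMap.IsNormal (T : H →ₗ.[ℂ] H) : Prop :=
  T.IsClosed ∧ Dense (T.domain : Set H) ∧ T.adjoint.pComp T = T.pComp T.adjoint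

/-- A symmetric (not necessarily densely defined) operator. -/
def LinearPMap.IsSymm (T : H →ₗ.[ℂ] H) : Prop :=
  ∀ x y : T.domain, inner ℂ (T x) (y : H) = (inner ℂ (x : H) (T y) : ℂ)

/-- A paranormal operator: `‖Tx‖² ≤ ‖T²x‖ ‖x‖` for every `x ∈ D(T²)`. -/
def LinearPMap.IsParanormal (T : H →ₗ.[ℂ] H) : Prop :=
  ∀ (x : H) (hx : x ∈ T.domain) (hTx : T ⟨x, hx⟩ ∈ T.domain),
    ‖T ⟨x, hx⟩‖ ^ 2 ≤ ‖T ⟨T ⟨x, hx⟩, hTx⟩‖ * ‖x‖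

end HilbertDefs

end

section Aux

variable {H : Type*} [NormedAddCommGroup H] [NormedSpace ℂ H]

theorem LinearPMap.mem_pComp_domain {g f : H →ₗ.[ℂ] H} {x : H} :
    x ∈ (g.pComp f).domain ↔ ∃ hx : x ∈ f.domain, f ⟨x, hx⟩ ∈ g.domain := by
  constructor
  · rintro ⟨⟨y, hy⟩, hmem, rfl⟩
    exact ⟨hy, hmem⟩
  · rintro ⟨hx, hfx⟩
    exact ⟨⟨x, hx⟩, hfx, rfl⟩

theorem LinearPMap.pComp_apply {g f : H →ₗ.[ℂ] H} (x : (g.pComp f).domain)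
    (hx : (x : H) ∈ f.domain) (hfx : f ⟨x, hx⟩ ∈ g.domain) :
    (g.pComp f) x = g ⟨f ⟨x, hx⟩, hfx⟩ := by
  set e := Submodule.equivMapOfInjective f.domain.subtype (Submodule.injective_subtype _)
      (g.domain.comap f.toFun) with he
  have h1 : e.symm x = ⟨⟨(x : H), hx⟩, hfx⟩ := by
    apply e.injective
    refine (e.apply_symm_apply _).trans ?_
    apply Subtype.ext
    rw [Submodule.coe_equivMapOfInjective_apply]
    rfl
  change g.toFun ((f.toFun.restrict (p := g.domain.comap f.toFun) (q := g.domain)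
      (fun _ hx => hx)) (e.symm x)) = _
  rw [h1]
  rfl

theorem LinearPMap.subConst_apply' (A : H →ₗ.[ℂ] H) (μ : ℂ) (v : H) (hv : v ∈ A.domain) :
    (A.subConst μ) ⟨v, hv⟩ = A ⟨v, hv⟩ - μ • v := rfl

theorem bddInv_of_bij [CompleteSpace H] (T : H →ₗ.[ℂ] H) (μ : ℂ)
    (hex : ∃ l : ℂ, (T.subConst l).IsBddInvertible)
    (hinj : ∀ x : T.domain, T x = μ • (x : H) → (x : H) = 0)
    (hsurj : ∀ y : H, ∃ x : T.domain, T x - μ • (x : H) = y) :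
    (T.subConst μ).IsBddInvertible := by
  obtain ⟨l, Rb, h1, h2⟩ := hex
  set G : H →L[ℂ] H := ContinuousLinearMap.id ℂ H + (l - μ) • Rb with hGdef
  have hGapp : ∀ y : H, G y = y + (l - μ) • Rb y := fun y => rfl
  have hG : ∀ y : H, ∃ hy : Rb y ∈ T.domain, G y = T ⟨Rb y, hy⟩ - μ • Rb y := by
    intro y
    obtain ⟨hy, hval⟩ := h1 y
    rw [T.subConst_apply' l (Rb y) hy] at hval
    refine ⟨hy, ?_⟩
    have hT : T ⟨Rb y, hy⟩ = y + l • Rb y := sub_eq_iff_eq_add.mp hval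
    rw [hGapp, hT, sub_smul]; abel
  have hGinj : LinearMap.ker (G : H →ₗ[ℂ] H) = ⊥ := by
    rw [LinearMap.ker_eq_bot']
    intro y hy
    change G y = 0 at hy
    obtain ⟨hmem, hGy⟩ := hG y
    have h0 : T ⟨Rb y, hmem⟩ = μ • (Rb y) := by
      have h' := (hGy.symm.trans hy)
      rwa [sub_eq_zero] at h'
    have hR0 : Rb y = 0 := hinj ⟨Rb y, hmem⟩ h0
    have := hGapp y
    rw [hy, hR0, smul_zero, add_zero] at this
    exact this.symm
  have hGsurj : LinearMap.range (G : H →ₗ[ℂ] H) = ⊤ := by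
    rw [LinearMap.range_eq_top]
    intro z
    obtain ⟨x, hx⟩ := hsurj z
    refine ⟨T x - l • (x : H), ?_⟩
    change G _ = z
    have hRbx : Rb (T x - l • (x : H)) = (x : H) := by
      have h := h2 ⟨(x : H), x.2⟩
      rw [T.subConst_apply' l (x : H) x.2] at h
      simpa using h
    obtain ⟨hmem, hGy⟩ := hG (T x - l • (x : H))
    rw [hGy]
    have hsub : (⟨Rb (T x - l • (x : H)), hmem⟩ : T.domain) = x := Subtype.ext hRbx
    rw [hsub, hRbx]
    exact hx
  set E := ContinuousLinearEquiv.ofBijective G hGinj hGsurj with hE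
  have hEapp : ∀ y, E y = G y := fun y => rfl
  refine ⟨Rb.comp (E.symm : H →L[ℂ] H), fun y => ?_, fun x => ?_⟩
  · obtain ⟨hmem, hGy⟩ := hG (E.symm y)
    refine ⟨hmem, ?_⟩
    show (T.subConst μ) ⟨Rb (E.symm y), hmem⟩ = y
    rw [T.subConst_apply' μ _ hmem, ← hGy, ← hEapp]
    exact E.apply_symm_apply y
  · obtain ⟨v, hv⟩ := x
    set y0 := T ⟨v, hv⟩ - l • v with hy0
    have hRby0 : Rb y0 = v := by
      have h := h2 ⟨v, hv⟩
      rw [T.subConst_apply' l v hv] at h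
      exact h
    obtain ⟨hmem, hGy⟩ := hG y0
    have hGyv : G y0 = T ⟨v, hv⟩ - μ • v := by
      rw [hGy]
      congr 1
      · congr 1
        exact Subtype.ext hRby0
      · rw [hRby0]
    have hTv : (T.subConst μ) ⟨v, hv⟩ = T ⟨v, hv⟩ - μ • v := T.subConst_apply' μ v hv
    have hEsymm : E.symm ((T.subConst μ) ⟨v, hv⟩) = y0 := by
      rw [hTv, ← hGyv, ← hEapp]
      exact E.symm_apply_apply y0
    show Rb (E.symm ((T.subConst μ) ⟨v, hv⟩)) = v
    rw [hEsymm, hRby0]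

/-- Bounded invertibility of `AB - μ` unpacked into explicit data. -/
theorem unpack_inv {A B : H →ₗ.[ℂ] H} {μ : ℂ} (h : ((A.pComp B).subConst μ).IsBddInvertible) :
    ∃ R : H →L[ℂ] H,
      (∀ y : H, ∃ (h1 : R y ∈ B.domain) (h2 : B ⟨R y, h1⟩ ∈ A.domain),
        A ⟨B ⟨R y, h1⟩, h2⟩ - μ • R y = y) ∧
      (∀ (v : H) (h1 : v ∈ B.domain) (h2 : B ⟨v, h1⟩ ∈ A.domain),
        R (A ⟨B ⟨v, h1⟩, h2⟩ - μ • v) = v) := by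
  obtain ⟨R, hR1, hR2⟩ := h
  refine ⟨R, fun y => ?_, fun v h1 h2 => ?_⟩
  · obtain ⟨hy, hval⟩ := hR1 y
    have hy' : R y ∈ (A.pComp B).domain := hy
    obtain ⟨hb, ha⟩ := LinearPMap.mem_pComp_domain.mp hy'
    refine ⟨hb, ha, ?_⟩
    rw [(A.pComp B).subConst_apply' μ (R y) hy,
      LinearPMap.pComp_apply (g := A) (f := B) ⟨R y, hy⟩ hb ha] at hval
    exact hval
  · have hv : v ∈ (A.pComp B).domain := LinearPMap.mem_pComp_domain.mpr ⟨h1, h2⟩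
    have h := hR2 ⟨v, hv⟩
    rw [(A.pComp B).subConst_apply' μ v hv,
      LinearPMap.pComp_apply (g := A) (f := B) ⟨v, hv⟩ h1 h2] at h
    exact h

theorem transfer_ne_zero [CompleteSpace H] (A B : H →ₗ.[ℂ] H) (μ : ℂ) (hμ : μ ≠ 0)
    (hAB : ((A.pComp B).subConst μ).IsBddInvertible)
    (hBA : ∃ l : ℂ, ((B.pComp A).subConst l).IsBddInvertible) :
    ((B.pComp A).subConst μ).IsBddInvertible := by
  obtain ⟨R, hR1, hR2⟩ := unpack_inv hAB
  apply bddInv_of_bij _ _ hBA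
  · -- injectivity of BA - μ
    rintro ⟨x, hxmem⟩ hx
    obtain ⟨ha, hb⟩ := LinearPMap.mem_pComp_domain.mp hxmem
    rw [LinearPMap.pComp_apply (g := B) (f := A) ⟨x, hxmem⟩ ha hb] at hx
    -- hx : B ⟨A ⟨x, ha⟩, hb⟩ = μ • x
    have h2 : B ⟨A ⟨x, ha⟩, hb⟩ ∈ A.domain := by
      rw [hx]; exact A.domain.smul_mem μ ha
    have key := hR2 (A ⟨x, ha⟩) hb h2
    have hsub : (⟨B ⟨A ⟨x, ha⟩, hb⟩, h2⟩ : A.domain) = μ • ⟨x, ha⟩ := Subtype.ext hx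
    rw [hsub, A.map_smul] at key
    have : A ⟨x, ha⟩ = 0 := by
      rw [sub_self, R.map_zero] at key; exact key.symm
    have hB0 : B ⟨A ⟨x, ha⟩, hb⟩ = 0 := by
      have : (⟨A ⟨x, ha⟩, hb⟩ : B.domain) = 0 := Subtype.ext this
      rw [this, B.map_zero]
    rw [hB0] at hx
    rcases smul_eq_zero.mp hx.symm with h | h
    · exact absurd h hμ
    · exact h
  · -- surjectivity of BA - μ
    intro y
    obtain ⟨l, hl⟩ := hBA
    obtain ⟨R', hR'1, -⟩ := unpack_inv hl
    obtain ⟨hx₀1, hx₀2, hy⟩ := hR'1 y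
    set x₀ : H := R' y with hx₀
    set w₀ : H := A ⟨x₀, hx₀1⟩ with hw₀
    -- hy : B ⟨w₀, hx₀2⟩ - l • x₀ = y
    have hBw₀ : B ⟨w₀, hx₀2⟩ = y + l • x₀ := sub_eq_iff_eq_add.mp hy
    obtain ⟨hq1, hq2, hqv⟩ := hR1 w₀
    set k : H := B ⟨R w₀, hq1⟩ with hk
    have hAk : A ⟨k, hq2⟩ = w₀ + μ • R w₀ := sub_eq_iff_eq_add.mp hqv
    have hAkB : A ⟨k, hq2⟩ ∈ B.domain := by
      rw [hAk]; exact B.domain.add_mem hx₀2 (B.domain.smul_mem μ hq1)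
    have hkmem : k ∈ (B.pComp A).domain := LinearPMap.mem_pComp_domain.mpr ⟨hq2, hAkB⟩
    have hx₀mem : x₀ ∈ (B.pComp A).domain := LinearPMap.mem_pComp_domain.mpr ⟨hx₀1, hx₀2⟩
    set kd : (B.pComp A).domain := ⟨k, hkmem⟩ with hkd
    set x₀d : (B.pComp A).domain := ⟨x₀, hx₀mem⟩ with hx₀d
    refine ⟨(1 - l * μ⁻¹) • kd + (l * μ⁻¹) • x₀d, ?_⟩
    have hTk : (B.pComp A) kd = B ⟨w₀, hx₀2⟩ + μ • k := by
      rw [LinearPMap.pComp_apply (g := B) (f := A) kd hq2 hAkB]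
      have hsub : (⟨A ⟨k, hq2⟩, hAkB⟩ : B.domain) = ⟨w₀, hx₀2⟩ + μ • ⟨R w₀, hq1⟩ :=
        Subtype.ext (by simp only [Submodule.coe_add, SetLike.val_smul]; exact hAk)
      rw [hsub, B.map_add, B.map_smul]
    have hTx₀ : (B.pComp A) x₀d = B ⟨w₀, hx₀2⟩ := by
      rw [LinearPMap.pComp_apply (g := B) (f := A) x₀d hx₀1 hx₀2]
    rw [LinearPMap.map_add, LinearPMap.map_smul, LinearPMap.map_smul, hTk, hTx₀, hBw₀]
    have hcoe : ((((1 - l * μ⁻¹) • kd + (l * μ⁻¹) • x₀d) : (B.pComp A).domain) : H)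
        = (1 - l * μ⁻¹) • k + (l * μ⁻¹) • x₀ := rfl
    rw [hcoe]
    match_scalars
    · field_simp; ring
    · field_simp; ring
    · field_simp; ring

end Aux

section AuxZero

variable {H : Type*} [NormedAddCommGroup H] [InnerProductSpace ℂ H] [CompleteSpace H]

theorem transfer_zero (A B : H →ₗ.[ℂ] H) (hdA : Dense (A.domain : Set H))
    (hkA : A.pKer = A.adjoint.pKer)
    (hAB : ((A.pComp B).subConst 0).IsBddInvertible)
    (hBA : ∃ l : ℂ, ((B.pComp A).subConst l).IsBddInvertible) :
    ((B.pComp A).subConst 0).IsBddInvertible := by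
  obtain ⟨R, hR1, hR2⟩ := unpack_inv hAB
  have hR1' : ∀ y : H, ∃ (h1 : R y ∈ B.domain) (h2 : B ⟨R y, h1⟩ ∈ A.domain),
      A ⟨B ⟨R y, h1⟩, h2⟩ = y := by
    intro y
    obtain ⟨h1, h2, hv⟩ := hR1 y
    exact ⟨h1, h2, by simpa using hv⟩
  have hR2' : ∀ (v : H) (h1 : v ∈ B.domain) (h2 : B ⟨v, h1⟩ ∈ A.domain),
      R (A ⟨B ⟨v, h1⟩, h2⟩) = v := by
    intro v h1 h2
    have := hR2 v h1 h2
    simpa using this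
  -- A is surjective
  have ranA : ∀ y : H, ∃ u : A.domain, A u = y := by
    intro y
    obtain ⟨h1, h2, hv⟩ := hR1' y
    exact ⟨⟨B ⟨R y, h1⟩, h2⟩, hv⟩
  -- the kernel of the adjoint of A is trivial
  have kerAdj : ∀ x ∈ A.adjoint.pKer, x = (0 : H) := by
    rintro x ⟨hx, hx0⟩
    have hFA := LinearPMap.adjoint_isFormalAdjoint hdA (T := A)
    obtain ⟨u, hu⟩ := ranA x
    have h := hFA ⟨x, hx⟩ u
    rw [hx0, hu] at h
    simp only [inner_zero_left] at h
    exact inner_self_eq_zero.mp h.symm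
  -- the kernel of A is trivial
  have kerA : ∀ (v : H) (hv : v ∈ A.domain), A ⟨v, hv⟩ = 0 → v = 0 := by
    intro v hv h
    have hmem : v ∈ A.pKer := ⟨hv, h⟩
    rw [hkA] at hmem
    exact kerAdj v hmem
  -- every element of dom A is in ran B
  have domA_ranB : ∀ (z : H) (hz : z ∈ A.domain),
      ∃ (h1 : R (A ⟨z, hz⟩) ∈ B.domain), B ⟨R (A ⟨z, hz⟩), h1⟩ = z := by
    intro z hz
    obtain ⟨h1, h2, hv⟩ := hR1' (A ⟨z, hz⟩)
    refine ⟨h1, ?_⟩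
    have hd : A (⟨B ⟨R (A ⟨z, hz⟩), h1⟩, h2⟩ - ⟨z, hz⟩) = 0 := by
      rw [A.map_sub, hv, sub_self]
    have := kerA _ _ hd
    have h' : B ⟨R (A ⟨z, hz⟩), h1⟩ - z = 0 := this
    rw [sub_eq_zero] at h'
    exact h'
  obtain ⟨l, hl⟩ := hBA
  by_cases hl0 : l = 0
  · rwa [hl0] at hl
  apply bddInv_of_bij _ _ ⟨l, hl⟩
  · -- injectivity of BA
    rintro ⟨x, hxmem⟩ hx
    rw [zero_smul] at hx
    obtain ⟨ha, hb⟩ := LinearPMap.mem_pComp_domain.mp hxmem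
    rw [LinearPMap.pComp_apply (g := B) (f := A) ⟨x, hxmem⟩ ha hb] at hx
    have h2 : B ⟨A ⟨x, ha⟩, hb⟩ ∈ A.domain := by rw [hx]; exact A.domain.zero_mem
    have key := hR2' (A ⟨x, ha⟩) hb h2
    have hsub : (⟨B ⟨A ⟨x, ha⟩, hb⟩, h2⟩ : A.domain) = 0 := Subtype.ext hx
    rw [hsub, A.map_zero, R.map_zero] at key
    exact kerA x ha key.symm
  · -- surjectivity of BA
    intro y
    obtain ⟨R', hR'1, -⟩ := unpack_inv hl
    obtain ⟨hx₀1, hx₀2, hy⟩ := hR'1 y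
    set x₀ : H := R' y with hx₀def
    set w₀ : H := A ⟨x₀, hx₀1⟩ with hw₀def
    have hBw₀ : B ⟨w₀, hx₀2⟩ = y + l • x₀ := sub_eq_iff_eq_add.mp hy
    obtain ⟨hs1, hsx⟩ := domA_ranB x₀ hx₀1
    -- hsx : B ⟨R w₀, hs1⟩ = x₀
    set w : H := w₀ - l • R w₀ with hwdef
    have hwB : w ∈ B.domain := B.domain.sub_mem hx₀2 (B.domain.smul_mem l hs1)
    have hBw : B ⟨w, hwB⟩ = y := by
      have hsub : (⟨w, hwB⟩ : B.domain) = ⟨w₀, hx₀2⟩ - l • ⟨R w₀, hs1⟩ := Subtype.ext rfl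
      rw [hsub, B.map_sub, B.map_smul, hBw₀, hsx]
      abel
    obtain ⟨ht1, ht2, htv⟩ := hR1' w
    set x : H := B ⟨R w, ht1⟩ with hxdef
    have hAxB : A ⟨x, ht2⟩ ∈ B.domain := by rw [htv]; exact hwB
    have hxmem : x ∈ (B.pComp A).domain := LinearPMap.mem_pComp_domain.mpr ⟨ht2, hAxB⟩
    refine ⟨⟨x, hxmem⟩, ?_⟩
    rw [LinearPMap.pComp_apply (g := B) (f := A) ⟨x, hxmem⟩ ht2 hAxB]
    have hsub : (⟨A ⟨x, ht2⟩, hAxB⟩ : B.domain) = ⟨w, hwB⟩ := Subtype.ext htv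
    rw [hsub, hBw, zero_smul, sub_zero]

end AuxZero

/-- if `σ(AB) ≠ ℂ`, `σ(BA) ≠ ℂ`, `ker A = ker A*` and `ker B = ker B*`,
then `σ(AB) = σ(BA)`. -/
theorem statement_5 {H : Type*} [NormedAddCommGroup H] [InnerProductSpace ℂ H] [CompleteSpace H]
    (A B : H →ₗ.[ℂ] H)
    (hdA : Dense (A.domain : Set H)) (hdB : Dense (B.domain : Set H))
    (hcA : A.IsClosable) (hcB : B.IsClosable)
    (hsAB : (A.pComp B).pSpectrum ≠ Set.univ) (hsBA : (B.pComp A).pSpectrum ≠ Set.univ)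
    (hkA : A.pKer = A.adjoint.pKer) (hkB : B.pKer = B.adjoint.pKer) :
    (A.pComp B).pSpectrum = (B.pComp A).pSpectrum := by
  have hAB' : ∃ l : ℂ, ((A.pComp B).subConst l).IsBddInvertible := by
    obtain ⟨l, hl⟩ := (Set.ne_univ_iff_exists_notMem _).mp hsAB
    simp only [LinearPMap.pSpectrum, Set.mem_setOf_eq, not_not] at hl
    exact ⟨l, hl⟩
  have hBA' : ∃ l : ℂ, ((B.pComp A).subConst l).IsBddInvertible := by
    obtain ⟨l, hl⟩ := (Set.ne_univ_iff_exists_notMem _).mp hsBA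
    simp only [LinearPMap.pSpectrum, Set.mem_setOf_eq, not_not] at hl
    exact ⟨l, hl⟩
  ext μ
  simp only [LinearPMap.pSpectrum, Set.mem_setOf_eq]
  apply not_congr
  constructor
  · intro h
    by_cases hμ : μ = 0
    · subst hμ
      exact transfer_zero A B hdA hkA h hBA'
    · exact transfer_ne_zero A B μ hμ h hBA'
  · intro h
    by_cases hμ : μ = 0
    · subst hμ
      exact transfer_zero B A hdB hkB h hAB'
    · exact transfer_ne_zero B A μ hμ h hAB'
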